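/- Let (N, g, J) be a metallic Riemannian manifold (J² = pJ + qI, g(JX,Y) = g(X,JY)) and let M̃ = ℝ ×_f N be the warped product with metric ⟨,⟩ = dt² + f²g for a positive smooth function f on ℝ. Define ξ = ∂/∂t, η = dt, and φ(X̃) = J(X) where X is the N-component of X̃ = η(X̃)ξ + X. Then (φ, η, ξ, ⟨,⟩) is an almost quadratic metric φ-structure on M̃: φξ = 0, φ² = pφ + q(I − η⊗ξ), ⟨φX̃,Ỹ⟩ = ⟨X̃,φỸ⟩, and ⟨φX̃,φỸ⟩ = p⟨φX̃,Ỹ⟩ + q(⟨X̃,Ỹ⟩ − η(X̃)η(Ỹ)). -/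
import Mathlib


/-- Let `(N,g,J)` be a metallic Riemannian manifold and
`M̃ = ℝ ×_f N` the warped product with metric `⟨,⟩ = dt² + f²g`. Vector fields on `M̃`
are modeled as pairs `X̃ = (η(X̃), X)` with `η(X̃)` a smooth function on `M̃`
(the `∂/∂t`-component) and `X` the `N`-component; `A` is the ring of smooth functions
on `M̃`, `V` the `A`-module of `N`-components of vector fields, with `g` and `J` lifted
to them. With `ξ = ∂/∂t = (1,0)`, `η = dt`, `φX̃ = J(X)`, the data `(φ, η, ξ, ⟨,⟩)`
is an almost quadratic metric φ-structure on `M̃`: `φξ = 0`,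
`φ² = pφ + q(I − η⊗ξ)`, `⟨φX̃,Ỹ⟩ = ⟨X̃,φỸ⟩`, and
`⟨φX̃,φỸ⟩ = p⟨φX̃,Ỹ⟩ + q(⟨X̃,Ỹ⟩ − η(X̃)η(Ỹ))`. -/
theorem warped_product_almost_quadratic_metric_structure
    {A V : Type*} [CommRing A] [AddCommGroup V] [Module A V]
    (g : V →ₗ[A] V →ₗ[A] A)
    (hgsym : ∀ X Y, g X Y = g Y X)
    (J : V →ₗ[A] V) (p q : ℕ) (hp : 0 < p) (hq : 0 < q)
    (hJ : ∀ X, J (J X) = (p : A) • J X + (q : A) • X)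
    (hJcompat : ∀ X Y, g (J X) Y = g X (J Y))
    (f : A) (hf : IsUnit f)
    (ξ : A × V) (hξ : ξ = (1, 0))
    (η : A × V → A) (hη : ∀ Z, η Z = Z.1)
    (φ : A × V → A × V) (hφ : ∀ Z, φ Z = (0, J Z.2))
    (metric : A × V → A × V → A)
    (hmetric : ∀ Z W, metric Z W = Z.1 * W.1 + f ^ 2 * g Z.2 W.2) :
    φ ξ = 0 ∧
    (∀ Z, φ (φ Z) = (p : A) • φ Z + (q : A) • (Z - η Z • ξ)) ∧
    (∀ Z W, metric (φ Z) W = metric Z (φ W)) ∧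
    (∀ Z W, metric (φ Z) (φ W) =
      (p : A) * metric (φ Z) W + (q : A) * (metric Z W - η Z * η W)) := by
  refine ⟨?_, ?_, ?_, ?_⟩
  · simp [hφ, hξ, Prod.ext_iff]
  · intro Z
    simp only [hφ, hη, hξ, Prod.smul_mk, Prod.ext_iff, Prod.fst_sub, Prod.snd_sub,
      Prod.fst_add, Prod.snd_add, smul_eq_mul]
    constructor
    · simp
    · rw [hJ]; simp
  · intro Z W
    simp only [hφ, hmetric]
    rw [hJcompat]; ring
  · intro Z W
    simp only [hφ, hmetric, hη]
    rw [hJcompat, hJ]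
    simp only [map_add, map_smul, smul_eq_mul, hJcompat]
    ring
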